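/- Let (M,ω) be pseudo-prequantisable with curvature form Ω and let {βᵢ} be smooth functions whose Hamiltonian vector fields span a polarisation P. An operator ᾰ = -iħ∇_{X_α} + α preserves the space of P-polarised sections (ker ∇_{X_{βᵢ}} for all i) if and only if for each i and every polarised ψ: (\{α,βᵢ\})̆ ψ = Ω(X_α, X_{βᵢ}) ψ. -/
import Mathlib


/-!
STATEMENT 10: Let (M,ω) be pseudo-prequantisable with curvature form Ω and let {βᵢ} be
smooth functions whose Hamiltonian vector fields span a polarisation P.  An operator
ᾰ = -iħ∇_{X_α} + α preserves the space of P-polarised sections (ker ∇_{X_{βᵢ}} for all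
i) if and only if for each i and every polarised ψ:
  ({α,βᵢ})̆ ψ = Ω(X_α, X_{βᵢ}) ψ.

Abstract operator model as in the other statements.
-/

/-- The pseudo-prequantum operator `ğ = -iħ∇_{X_g} + g`. -/
noncomputable def preOp {M S VF : Type*} [AddCommGroup S] [Module ℂ S]
    (hbar : ℝ) (X : (M → ℝ) → VF) (nabla : VF → Module.End ℂ S)
    (mul : (M → ℝ) → Module.End ℂ S) (A : M → ℝ) : Module.End ℂ S :=
  (-(Complex.I * hbar)) • nabla (X A) + mul A

theorem stmt10 {M S VF ι : Type*} [AddCommGroup S] [Module ℂ S]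
    (hbar : ℝ) (hbar_ne : hbar ≠ 0)
    (X : (M → ℝ) → VF) (bracket : VF → VF → VF)
    (pois : (M → ℝ) → (M → ℝ) → (M → ℝ))
    (Ω : VF → VF → (M → ℝ))
    (vact : VF → (M → ℝ) → (M → ℝ))
    (nabla : VF → Module.End ℂ S)
    (mul : (M → ℝ) → Module.End ℂ S)
    (hmul_add : ∀ g h : M → ℝ, mul (g + h) = mul g + mul h)
    (hmul_neg : ∀ g : M → ℝ, mul (-g) = -mul g)
    -- curvature condition curv(∇) = Ω
    (hcurv : ∀ v w : VF,
      ((Complex.I * hbar) • (nabla v * nabla w - nabla w * nabla v - nabla (bracket v w))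
        : Module.End ℂ S) = mul (Ω v w))
    (hX : ∀ A B : M → ℝ, X (pois A B) = bracket (X A) (X B))
    (hLeib : ∀ (v : VF) (g : M → ℝ), nabla v * mul g - mul g * nabla v = mul (vact v g))
    (hvact : ∀ A B : M → ℝ, vact (X A) B = pois A B)
    (hanti : ∀ A B : M → ℝ, pois B A = -pois A B)
    -- the functions βᵢ generating the polarisation P = span{X_{βᵢ}}, and the observable α
    (β : ι → (M → ℝ)) (α : M → ℝ) :
    -- ᾰ preserves the polarised sections ...
    (∀ ψ : S, (∀ i, nabla (X (β i)) ψ = 0) →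
      ∀ i, nabla (X (β i)) (preOp hbar X nabla mul α ψ) = 0)
    ↔ -- ... iff for each i and every polarised ψ, ({α,βᵢ})̆ ψ = Ω(X_α,X_{βᵢ}) ψ
    (∀ ψ : S, (∀ i, nabla (X (β i)) ψ = 0) →
      ∀ i, preOp hbar X nabla mul (pois α (β i)) ψ = mul (Ω (X α) (X (β i))) ψ) := by
  have key : ∀ (ψ : S) (i : ι), nabla (X (β i)) ψ = 0 →
      nabla (X (β i)) (preOp hbar X nabla mul α ψ) =
        mul (Ω (X α) (X (β i))) ψ - preOp hbar X nabla mul (pois α (β i)) ψ := by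
    intro ψ i hψ
    have hc := congrArg (fun f : Module.End ℂ S => f ψ) (hcurv (X α) (X (β i)))
    have hl := congrArg (fun f : Module.End ℂ S => f ψ) (hLeib (X (β i)) α)
    simp only [LinearMap.smul_apply, LinearMap.sub_apply, Module.End.mul_apply, hψ, map_zero,
      zero_sub, hvact] at hc hl
    -- hc : (I*hbar) • (-(nabla (X (β i)) (nabla (X α) ψ)) - nabla (bracket (X α) (X (β i))) ψ)
    --        = mul (Ω (X α) (X (β i))) ψ
    -- hl : nabla (X (β i)) (mul α ψ) - mul α 0 = mul (pois (β i) α) ψ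
    have hl' : nabla (X (β i)) (mul α ψ) = -(mul (pois α (β i)) ψ) := by
      have := hl
      rw [hanti α (β i), hmul_neg] at this
      simpa using this
    have hB : nabla (bracket (X α) (X (β i))) ψ = nabla (X (pois α (β i))) ψ := by
      rw [hX]
    rw [hB] at hc
    simp only [preOp, LinearMap.add_apply, LinearMap.smul_apply, map_add, map_smul, hl']
    have hc2 : (-(Complex.I * hbar)) • nabla (X (β i)) (nabla (X α) ψ) =
        mul (Ω (X α) (X (β i))) ψ + (Complex.I * hbar) • nabla (X (pois α (β i))) ψ := by
      rw [← hc, smul_sub, smul_neg]; module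
    rw [hc2]; module
  constructor
  · intro h ψ hψ i
    have := key ψ i (hψ i)
    rw [h ψ hψ i] at this
    have := this.symm
    rw [sub_eq_zero] at this
    exact this.symm
  · intro h ψ hψ i
    rw [key ψ i (hψ i), h ψ hψ i, sub_self]
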